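/- Let W : ℝ^{m+n} → ℝ^{m+n} be a C¹ vector field of the form W(q) = ζ(q)·e, where e is a fixed unit vector lying in an m-plane π₀ and ζ depends, in a neighborhood of a subspace V ⊆ π₀ with e ⊥ V, only on the V-coordinates. Then for any m-dimensional plane π the tangential divergence satisfies |div_π W(q)| ≤ C·|P_{π₀} − P_π|·|P_V ∘ P_{π^⊥}|·|DW(q)|, where P denotes orthogonal projection and |·| the operator (or Hilbert–Schmidt) norm. In particular, if V ⊆ π then div_π W = 0 in that neighborhood. -/

import Mathlib

/-- The orthogonal projection of `ℝ^d` onto a subspace, as a continuous linear endomorphism. -/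
noncomputable def projCLM {d : ℕ} (π : Submodule ℝ (EuclideanSpace ℝ (Fin d))) :
    EuclideanSpace ℝ (Fin d) →L[ℝ] EuclideanSpace ℝ (Fin d) :=
  π.subtypeL.comp (π.orthogonalProjection)

/-- The tangential divergence of a vector field `W` relative to a plane `π`:
`div_π W(q) = tr(P_π ∘ DW(q))`. -/
noncomputable def tangentialDiv {d : ℕ} (π : Submodule ℝ (EuclideanSpace ℝ (Fin d)))
    (W : EuclideanSpace ℝ (Fin d) → EuclideanSpace ℝ (Fin d))
    (q : EuclideanSpace ℝ (Fin d)) : ℝ :=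
  LinearMap.trace ℝ (EuclideanSpace ℝ (Fin d)) ((projCLM π).comp (fderiv ℝ W q) :
    EuclideanSpace ℝ (Fin d) →L[ℝ] EuclideanSpace ℝ (Fin d)).toLinearMap

/-- The trace of the rank-one map `x ↦ f x • v` is `f v`. -/
lemma trace_smulRight' {E : Type*} [NormedAddCommGroup E] [NormedSpace ℝ E]
    [FiniteDimensional ℝ E] (f : E →ₗ[ℝ] ℝ) (v : E) :
    LinearMap.trace ℝ E (LinearMap.smulRight f v) = f v := by
  have h : LinearMap.smulRight f v = (LinearMap.toSpanSingleton ℝ E v).comp f := by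
    ext x; simp [LinearMap.toSpanSingleton, LinearMap.smulRight_apply]
  have h2 : f.comp (LinearMap.toSpanSingleton ℝ E v) = (f v) • LinearMap.id := by
    ext; simp [LinearMap.toSpanSingleton]
  rw [h, LinearMap.trace_comp_comm', h2, map_smul, LinearMap.trace_id]
  simp

lemma projCLM_idem {d : ℕ} (V : Submodule ℝ (EuclideanSpace ℝ (Fin d)))
    (x : EuclideanSpace ℝ (Fin d)) : projCLM V (projCLM V x) = projCLM V x := by
  simp [projCLM, Submodule.orthogonalProjectionOnto_mem_subspace_eq_self,
    Submodule.starProjection_eq_self_iff]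

lemma main_aux {d : ℕ} (π₀ π V : Submodule ℝ (EuclideanSpace ℝ (Fin d)))
    (e : EuclideanSpace ℝ (Fin d)) (ζ : EuclideanSpace ℝ (Fin d) → ℝ)
    (U : Set (EuclideanSpace ℝ (Fin d)))
    (heπ₀ : e ∈ π₀) (he : ‖e‖ = 1)
    (hEV : ∀ v ∈ V, inner ℝ e v = (0 : ℝ))
    (hU : IsOpen U)
    (hζ : Differentiable ℝ ζ)
    (hloc : ∀ q ∈ U, ζ q = ζ ((V.orthogonalProjection q : EuclideanSpace ℝ (Fin d))))
    (q : EuclideanSpace ℝ (Fin d)) (hq : q ∈ U) :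
    (|tangentialDiv π (fun x => ζ x • e) q| ≤
      1 * ‖projCLM π₀ - projCLM π‖ *
        ‖(projCLM V).comp
          (ContinuousLinearMap.id ℝ (EuclideanSpace ℝ (Fin d)) - projCLM π)‖ *
        ‖fderiv ℝ (fun x => ζ x • e) q‖) ∧
    (V ≤ π → tangentialDiv π (fun x => ζ x • e) q = 0) := by
  set L := fderiv ℝ ζ q with hL
  have hDW : fderiv ℝ (fun x => ζ x • e) q = L.smulRight e :=
    fderiv_smul_const (hζ q) e
  -- chain rule: L factors through P_V
  have hfact : L = (fderiv ℝ ζ ((projCLM V) q)).comp (projCLM V) := by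
    have heq : ζ =ᶠ[nhds q] (ζ ∘ (projCLM V)) := by
      filter_upwards [hU.mem_nhds hq] with x hx
      exact hloc x hx
    rw [hL, heq.fderiv_eq]
    rw [fderiv_comp q (hζ _) (projCLM V).differentiableAt, (projCLM V).fderiv]
  have hLV : ∀ x, L (projCLM V x) = L x := by
    intro x
    conv_lhs => rw [hfact]
    conv_rhs => rw [hfact]
    simp only [ContinuousLinearMap.comp_apply, projCLM_idem]
  -- divergence = L (P_π e)
  have hdiv : tangentialDiv π (fun x => ζ x • e) q = L (projCLM π e) := by
    unfold tangentialDiv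
    rw [hDW]
    have hcomp : (projCLM π).comp (L.smulRight e) = L.smulRight (projCLM π e) := by
      ext x; simp
    rw [hcomp]
    exact trace_smulRight' (L : _ →ₗ[ℝ] ℝ) (projCLM π e)
  -- P_V e = 0
  have hPVe : projCLM V e = 0 := by
    have hmem : e ∈ Vᗮ := by
      intro v hv
      rw [real_inner_comm]
      exact hEV v hv
    simp [projCLM, Submodule.orthogonalProjectionOnto_apply_of_mem_orthogonal hmem]
  have hB0e : projCLM π₀ e = e := by
    exact Submodule.starProjection_eq_self_iff.2 heπ₀
  have hkey : L (projCLM π e) =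
      - L ((projCLM V).comp (ContinuousLinearMap.id ℝ (EuclideanSpace ℝ (Fin d)) - projCLM π)
        ((projCLM π₀ - projCLM π) e)) := by
    have h1 : (projCLM V).comp (ContinuousLinearMap.id ℝ (EuclideanSpace ℝ (Fin d)) - projCLM π)
        ((projCLM π₀ - projCLM π) e) = projCLM V e - projCLM V (projCLM π e) := by
      simp only [ContinuousLinearMap.comp_apply, ContinuousLinearMap.sub_apply,
        ContinuousLinearMap.id_apply, hB0e, map_sub, projCLM_idem]
      abel
    rw [h1, map_sub, hPVe, map_zero, hLV]
    ring
  constructor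
  · rw [hdiv, hkey, hDW, abs_neg]
    have hle1 := L.le_opNorm ((projCLM V).comp
      (ContinuousLinearMap.id ℝ (EuclideanSpace ℝ (Fin d)) - projCLM π)
      ((projCLM π₀ - projCLM π) e))
    have hle2 := ((projCLM V).comp
      (ContinuousLinearMap.id ℝ (EuclideanSpace ℝ (Fin d)) - projCLM π)).le_opNorm
      ((projCLM π₀ - projCLM π) e)
    have hle3 := (projCLM π₀ - projCLM π).le_opNorm e
    rw [he, mul_one] at hle3
    rw [ContinuousLinearMap.norm_smulRight_apply, he, mul_one]
    have h0 : (0:ℝ) ≤ ‖L‖ := norm_nonneg _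
    have h1 : (0:ℝ) ≤ ‖(projCLM V).comp
      (ContinuousLinearMap.id ℝ (EuclideanSpace ℝ (Fin d)) - projCLM π)‖ := norm_nonneg _
    calc |L ((projCLM V).comp (ContinuousLinearMap.id ℝ (EuclideanSpace ℝ (Fin d)) - projCLM π)
          ((projCLM π₀ - projCLM π) e))|
        ≤ ‖L‖ * ‖(projCLM V).comp (ContinuousLinearMap.id ℝ (EuclideanSpace ℝ (Fin d)) - projCLM π)
          ((projCLM π₀ - projCLM π) e)‖ := hle1
      _ ≤ ‖L‖ * (‖(projCLM V).comp
          (ContinuousLinearMap.id ℝ (EuclideanSpace ℝ (Fin d)) - projCLM π)‖ *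
          ‖(projCLM π₀ - projCLM π) e‖) := by gcongr
      _ ≤ ‖L‖ * (‖(projCLM V).comp
          (ContinuousLinearMap.id ℝ (EuclideanSpace ℝ (Fin d)) - projCLM π)‖ *
          ‖projCLM π₀ - projCLM π‖) := by gcongr
      _ = 1 * ‖projCLM π₀ - projCLM π‖ *
          ‖(projCLM V).comp (ContinuousLinearMap.id ℝ (EuclideanSpace ℝ (Fin d)) - projCLM π)‖ *
          ‖L‖ := by ring
  · intro hVπ
    rw [hdiv, ← hLV (projCLM π e)]
    have hsub : projCLM V (e - projCLM π e) = 0 := by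
      have hmem' : e - projCLM π e ∈ πᗮ := by
        exact Submodule.sub_starProjection_mem_orthogonal (K := π) e
      have hmem'' : e - projCLM π e ∈ Vᗮ := (Submodule.orthogonal_le hVπ) hmem'
      have hz : V.orthogonalProjection (e - projCLM π e) = 0 :=
        Submodule.orthogonalProjectionOnto_apply_of_mem_orthogonal hmem''
      show V.subtypeL.comp (V.orthogonalProjection) (e - projCLM π e) = 0
      simp only [ContinuousLinearMap.comp_apply, hz, Submodule.subtypeL_apply,
        ZeroMemClass.coe_zero]
    rw [map_sub, hPVe, zero_sub, neg_eq_zero] at hsub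
    rw [hsub, map_zero]

/-- Let `W(q) = ζ(q) • e` with `e` a unit vector of an `m`-plane `π₀`, `V ⊆ π₀` a subspace with
`e ⊥ V`, and suppose that on a neighborhood `U` of `V` the function `ζ` depends only on the
`V`-coordinates.  Then for every `m`-plane `π` and `q ∈ U`,
`|div_π W(q)| ≤ C ‖P_{π₀} − P_π‖ ‖P_V ∘ P_{π^⊥}‖ ‖DW(q)‖`; in particular `div_π W = 0` on `U`
whenever `V ⊆ π`. -/
theorem stmt_14 :
    ∃ C : ℝ, 0 < C ∧
      ∀ (d m : ℕ) (π₀ π V : Submodule ℝ (EuclideanSpace ℝ (Fin d)))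
        (e : EuclideanSpace ℝ (Fin d)) (ζ : EuclideanSpace ℝ (Fin d) → ℝ)
        (U : Set (EuclideanSpace ℝ (Fin d))),
        Module.finrank ℝ π₀ = m → Module.finrank ℝ π = m →
        V ≤ π₀ → e ∈ π₀ → ‖e‖ = 1 →
        (∀ v ∈ V, inner ℝ e v = (0 : ℝ)) →
        IsOpen U → (V : Set (EuclideanSpace ℝ (Fin d))) ⊆ U →
        Differentiable ℝ ζ →
        (∀ q ∈ U, ζ q = ζ ((V.orthogonalProjection q : EuclideanSpace ℝ (Fin d)))) →
        ∀ q ∈ U,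
          (|tangentialDiv π (fun x => ζ x • e) q| ≤
            C * ‖projCLM π₀ - projCLM π‖ *
              ‖(projCLM V).comp
                (ContinuousLinearMap.id ℝ (EuclideanSpace ℝ (Fin d)) - projCLM π)‖ *
              ‖fderiv ℝ (fun x => ζ x • e) q‖) ∧
          (V ≤ π → tangentialDiv π (fun x => ζ x • e) q = 0) := by
  exact ⟨1, one_pos, fun d m π₀ π V e ζ U _ _ _ heπ₀ he hEV hU _ hζ hloc q hq =>
    main_aux π₀ π V e ζ U heπ₀ he hEV hU hζ hloc q hq⟩
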